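/- arXiv:2410.14554 — 3 statements merged into one kernel-verified Lean document; each statement's English description precedes it below -/
import Mathlib

section
/- Let M be an n×n matrix over a commutative ring and let B be the 2n×2n block matrix with blocks [[0, M],[-Mᵀ, 0]]. Then B is skew-symmetric and pff(B) = (-1)^{n(n-1)/2} · det(M). -/
open Matrix

def pairFst {n : ℕ} (k : Fin n) : Fin (2 * n) := ⟨2 * k.val, by have := k.isLt; omega⟩
def pairSnd {n : ℕ} (k : Fin n) : Fin (2 * n) := ⟨2 * k.val + 1, by have := k.isLt; omega⟩

/-- A permutation of `Fin (2n)` is pair-normalized if it lists a partition of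
`{1,…,2n}` into pairs `{i₁,j₁},…,{iₙ,jₙ}` with `i₁ < i₂ < ⋯ < iₙ` and `iₖ < jₖ`. -/
def IsPairNormal {n : ℕ} (σ : Equiv.Perm (Fin (2 * n))) : Prop :=
  (∀ k : Fin n, σ (pairFst k) < σ (pairSnd k)) ∧
    ∀ k l : Fin n, k < l → σ (pairFst k) < σ (pairFst l)

instance {n : ℕ} (σ : Equiv.Perm (Fin (2 * n))) : Decidable (IsPairNormal σ) := by
  unfold IsPairNormal; infer_instance

/-- The Pfaffian of a `2n × 2n` matrix: the signed sum over pair partitions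
`P = {{i₁,j₁},…,{iₙ,jₙ}}` of `sgn σ_P · a_{i₁j₁} ⋯ a_{iₙjₙ}`. -/
noncomputable def Matrix.pff {R : Type*} [CommRing R] {n : ℕ}
    (A : Matrix (Fin (2 * n)) (Fin (2 * n)) R) : R :=
  ∑ σ ∈ Finset.univ.filter (fun σ : Equiv.Perm (Fin (2 * n)) => IsPairNormal σ),
    (Equiv.Perm.sign σ : ℤ) • ∏ k : Fin n, A (σ (pairFst k)) (σ (pairSnd k))

/-- The canonical equivalence `Fin n ⊕ Fin n ≃ Fin (2n)`. -/
def sumEquiv (n : ℕ) : (Fin n ⊕ Fin n) ≃ Fin (2 * n) :=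
  finSumFinEquiv.trans (finCongr (two_mul n).symm)

namespace PffAux

lemma sumEquiv_inl_val {n : ℕ} (i : Fin n) : (sumEquiv n (Sum.inl i)).val = i.val := by
  simp [sumEquiv]

lemma sumEquiv_inr_val {n : ℕ} (i : Fin n) : (sumEquiv n (Sum.inr i)).val = n + i.val := by
  simp [sumEquiv]; omega

/-- The interleaving equivalence: `inl k ↦ 2k`, `inr k ↦ 2k+1`. -/
def interEquiv (n : ℕ) : (Fin n ⊕ Fin n) ≃ Fin (2 * n) where
  toFun := Sum.elim pairFst pairSnd
  invFun m := if h : m.val % 2 = 0 then Sum.inl ⟨m.val / 2, by have := m.isLt; omega⟩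
    else Sum.inr ⟨m.val / 2, by have := m.isLt; omega⟩
  left_inv x := by
    rcases x with k | k
    · simp only [Sum.elim_inl]
      refine (dif_pos (show (pairFst k).val % 2 = 0 from Nat.mul_mod_right 2 k.val)).trans ?_
      exact congrArg Sum.inl (Fin.ext (show 2 * k.val / 2 = k.val by omega))
    · simp only [Sum.elim_inr]
      refine (dif_neg (show ¬(pairSnd k).val % 2 = 0 by show ¬(2 * k.val + 1) % 2 = 0; omega)).trans ?_
      exact congrArg Sum.inr (Fin.ext (show (2 * k.val + 1) / 2 = k.val by omega))
  right_inv m := by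
    dsimp only
    by_cases h : m.val % 2 = 0
    · rw [dif_pos h]
      exact Fin.ext (show 2 * (m.val / 2) = m.val by omega)
    · rw [dif_neg h]
      exact Fin.ext (show 2 * (m.val / 2) + 1 = m.val by omega)

@[simp] lemma interEquiv_inl {n : ℕ} (k : Fin n) : interEquiv n (Sum.inl k) = pairFst k := rfl
@[simp] lemma interEquiv_inr {n : ℕ} (k : Fin n) : interEquiv n (Sum.inr k) = pairSnd k := rfl

lemma interEquiv_symm_fst {n : ℕ} (k : Fin n) :
    (interEquiv n).symm (pairFst k) = Sum.inl k := (interEquiv n).symm_apply_apply (Sum.inl k)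

lemma interEquiv_symm_snd {n : ℕ} (k : Fin n) :
    (interEquiv n).symm (pairSnd k) = Sum.inr k := (interEquiv n).symm_apply_apply (Sum.inr k)

/-- The base permutation `2k ↦ k`, `2k+1 ↦ n+k`. -/
def rho (n : ℕ) : Equiv.Perm (Fin (2 * n)) := (interEquiv n).symm.trans (sumEquiv n)

lemma rho_val {n : ℕ} (x : Fin (2 * n)) :
    (rho n x).val = if x.val % 2 = 0 then x.val / 2 else n + x.val / 2 := by
  unfold rho interEquiv
  simp only [Equiv.trans_apply, Equiv.coe_fn_symm_mk]
  by_cases h : x.val % 2 = 0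
  · rw [dif_pos h, if_pos h, sumEquiv_inl_val]
  · rw [dif_neg h, if_neg h, sumEquiv_inr_val]

/-- Extension of `rho n` to `Fin (2n+2)` fixing the last two points. -/
def extPerm (n : ℕ) : Equiv.Perm (Fin (2 * n + 2)) :=
  (finSumFinEquiv (m := 2 * n) (n := 2)).permCongr (Equiv.sumCongr (rho n) (Equiv.refl _))

lemma extPerm_val {n : ℕ} (x : Fin (2 * n + 2)) :
    (extPerm n x).val =
      if x.val % 2 = 0 ∧ x.val < 2 * n then x.val / 2
      else if x.val < 2 * n then n + x.val / 2
      else x.val := by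
  by_cases h : x.val < 2 * n
  · have hx : x = Fin.castAdd 2 ⟨x.val, h⟩ := Fin.ext rfl
    rw [hx]
    simp only [extPerm, Equiv.permCongr_apply, finSumFinEquiv_symm_apply_castAdd,
      Equiv.sumCongr_apply, Sum.map_inl, finSumFinEquiv_apply_left, Fin.coe_castAdd]
    rw [rho_val]
    simp only [h, and_true]
    split <;> simp
  · have hx : x = Fin.natAdd (2 * n) ⟨x.val - 2 * n, by have := x.isLt; omega⟩ :=
      Fin.ext (by simp; omega)
    rw [hx]
    simp only [extPerm, Equiv.permCongr_apply, finSumFinEquiv_symm_apply_natAdd,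
      Equiv.sumCongr_apply, Sum.map_inr, Equiv.refl_apply, finSumFinEquiv_apply_right,
      Fin.coe_natAdd]
    have : ¬ (2 * n + (x.val - 2 * n) < 2 * n) := by omega
    rw [if_neg (by omega), if_neg (by omega)]

lemma sign_extPerm {n : ℕ} : Equiv.Perm.sign (extPerm n) = Equiv.Perm.sign (rho n) := by
  simp [extPerm]

/-- The middle range predicate. -/
def midP (n : ℕ) : Fin (2 * n + 2) → Prop := fun x => n ≤ x.val ∧ x.val ≤ 2 * n

instance {n : ℕ} : DecidablePred (midP n) := fun x => instDecidableAnd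

/-- The middle range `[n, 2n]` of `Fin (2n+2)`. -/
def midEquiv (n : ℕ) : Fin (n + 1) ≃ {x : Fin (2 * n + 2) // midP n x} where
  toFun k := ⟨⟨n + k.val, by have := k.isLt; omega⟩, by
    have := k.isLt
    constructor
    · show n ≤ n + k.val
      omega
    · show n + k.val ≤ 2 * n
      omega⟩
  invFun y := ⟨y.val.val - n, by obtain ⟨h1, h2⟩ := y.prop; have := y.val.isLt; omega⟩
  left_inv k := by ext; simp
  right_inv y := by
    apply Subtype.ext
    apply Fin.ext
    obtain ⟨h1, h2⟩ := y.prop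
    show n + (y.val.val - n) = y.val.val
    omega

/-- The cycle `n ↦ n+1 ↦ ⋯ ↦ 2n ↦ n` on `Fin (2n+2)`. -/
def cyc (n : ℕ) : Equiv.Perm (Fin (2 * n + 2)) :=
  (finRotate (n + 1)).extendDomain (midEquiv n)

lemma cyc_val {n : ℕ} (x : Fin (2 * n + 2)) :
    (cyc n x).val =
      if n ≤ x.val ∧ x.val ≤ 2 * n then (if x.val = 2 * n then n else x.val + 1)
      else x.val := by
  by_cases h : n ≤ x.val ∧ x.val ≤ 2 * n
  · rw [if_pos h]
    have hm : midP n x := h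
    have h2 : (cyc n) x = ((midEquiv n) ((finRotate (n+1)) ((midEquiv n).symm ⟨x, hm⟩))).val := by
      unfold cyc
      exact Equiv.Perm.extendDomain_apply_subtype _ _ hm
    rw [h2]
    have hsymm : (midEquiv n).symm ⟨x, hm⟩ = ⟨x.val - n, by omega⟩ := by
      apply (midEquiv n).injective
      simp only [Equiv.apply_symm_apply]
      ext
      simp [midEquiv]
      omega
    rw [hsymm]
    have hrot := coe_finRotate (⟨x.val - n, by omega⟩ : Fin (n + 1))
    split_ifs with hx
    · have : (⟨x.val - n, by omega⟩ : Fin (n + 1)) = Fin.last n := by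
        ext; simp; omega
      rw [this, finRotate_last]
      simp [midEquiv]
    · have hne : (⟨x.val - n, by omega⟩ : Fin (n + 1)) ≠ Fin.last n := by
        simp only [ne_eq, Fin.ext_iff]
        simp
        omega
      simp only [midEquiv, Equiv.coe_fn_mk]
      rw [coe_finRotate_of_ne_last hne]
      simp
      omega
  · rw [if_neg h]
    have : (cyc n) x = x := by
      unfold cyc
      exact Equiv.Perm.extendDomain_apply_not_subtype _ _ (show ¬ midP n x from h)
    rw [this]

lemma sign_cyc {n : ℕ} : Equiv.Perm.sign (cyc n) = (-1) ^ n := by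
  unfold cyc
  rw [Equiv.Perm.sign_extendDomain, sign_finRotate]
  simp

lemma rho_succ (n : ℕ) : rho (n + 1) = cyc n * extPerm n := by
  have key : ∀ x : Fin (2 * n + 2), ((cyc n) ((extPerm n) x)).val =
      if x.val % 2 = 0 then x.val / 2 else n + 1 + x.val / 2 := by
    intro x
    rw [cyc_val, extPerm_val]
    have hx := x.isLt
    have h2 : x.val % 2 = 0 ∨ x.val % 2 = 1 := Nat.mod_two_eq_zero_or_one _
    split_ifs <;> omega
  apply Equiv.ext
  intro x
  apply Fin.ext
  rw [rho_val]
  exact (key x).symm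

lemma sign_rho (n : ℕ) : Equiv.Perm.sign (rho n) = (-1) ^ (n * (n - 1) / 2) := by
  induction n with
  | zero =>
    have : rho 0 = 1 := by
      apply Equiv.ext; intro x; exact x.elim0
    rw [this]
    simp
  | succ n ih =>
    have hmul : Equiv.Perm.sign (cyc n * extPerm n) =
        (-1) ^ n * Equiv.Perm.sign (rho n) := by
      rw [Equiv.Perm.sign_mul, sign_cyc, sign_extPerm]
    rw [rho_succ]
    refine Eq.trans hmul ?_
    rw [ih, ← pow_add]
    congr 1
    have hmn : n * (n - 1) + 2 * n = (n + 1) * (n + 1 - 1) := by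
      cases n with
      | zero => rfl
      | succ m => simp [Nat.succ_sub_one]; ring
    omega

/-- The permutation sending `2k ↦ k` and `2k+1 ↦ n + π k`. -/
def Phi {n : ℕ} (π : Equiv.Perm (Fin n)) : Equiv.Perm (Fin (2 * n)) :=
  (interEquiv n).symm.trans ((Equiv.sumCongr (Equiv.refl (Fin n)) π).trans (sumEquiv n))

lemma Phi_fst {n : ℕ} (π : Equiv.Perm (Fin n)) (k : Fin n) :
    Phi π (pairFst k) = sumEquiv n (Sum.inl k) := by
  simp [Phi, interEquiv_symm_fst]

lemma Phi_snd {n : ℕ} (π : Equiv.Perm (Fin n)) (k : Fin n) :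
    Phi π (pairSnd k) = sumEquiv n (Sum.inr (π k)) := by
  simp [Phi, interEquiv_symm_snd]

lemma Phi_eq {n : ℕ} (π : Equiv.Perm (Fin n)) :
    Phi π = rho n * ((interEquiv n).permCongr (Equiv.sumCongr (Equiv.refl (Fin n)) π)) := by
  apply Equiv.ext
  intro x
  simp [Phi, rho, Equiv.permCongr_apply]

lemma sign_Phi {n : ℕ} (π : Equiv.Perm (Fin n)) :
    Equiv.Perm.sign (Phi π) = (-1) ^ (n * (n - 1) / 2) * Equiv.Perm.sign π := by
  rw [Phi_eq, Equiv.Perm.sign_mul, Equiv.Perm.sign_permCongr, Equiv.Perm.sign_sumCongr,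
    Equiv.Perm.sign_refl, one_mul, sign_rho]

lemma Phi_injective {n : ℕ} : Function.Injective (Phi (n := n)) := by
  intro π π' h
  apply Equiv.ext
  intro k
  have := congrArg (fun σ : Equiv.Perm (Fin (2 * n)) => σ (pairSnd k)) h
  simp only [Phi_snd] at this
  exact Sum.inr.inj ((sumEquiv n).injective this)

lemma Phi_pairNormal {n : ℕ} (π : Equiv.Perm (Fin n)) : IsPairNormal (Phi π) := by
  constructor
  · intro k
    rw [Phi_fst, Phi_snd, Fin.lt_def, sumEquiv_inl_val, sumEquiv_inr_val]
    have := k.isLt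
    omega
  · intro k l hkl
    rw [Phi_fst, Phi_fst, Fin.lt_def, sumEquiv_inl_val, sumEquiv_inl_val]
    exact hkl

lemma sumEquiv_symm {n : ℕ} (i : Fin (2 * n)) :
    (sumEquiv n).symm i = if h : i.val < n then Sum.inl ⟨i.val, h⟩
      else Sum.inr ⟨i.val - n, by have := i.isLt; omega⟩ := by
  rw [Equiv.symm_apply_eq]
  split_ifs with h
  · exact Fin.ext (by rw [sumEquiv_inl_val])
  · refine Fin.ext ?_
    rw [sumEquiv_inr_val]
    show i.val = n + (i.val - n)
    omega

end PffAux

open PffAux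

/-- For an `n × n` matrix `M`, the block matrix `[[0, M], [-Mᵀ, 0]]` is skew-symmetric
and its Pfaffian equals `(-1)^{n(n-1)/2} · det M`. -/
theorem pff_fromBlocks {R : Type*} [CommRing R] (n : ℕ) (M : Matrix (Fin n) (Fin n) R) :
    ((Matrix.reindex (sumEquiv n) (sumEquiv n)
        (Matrix.fromBlocks 0 M (-Mᵀ) 0))ᵀ =
      -(Matrix.reindex (sumEquiv n) (sumEquiv n) (Matrix.fromBlocks 0 M (-Mᵀ) 0))) ∧
    (Matrix.reindex (sumEquiv n) (sumEquiv n) (Matrix.fromBlocks 0 M (-Mᵀ) 0)).pff =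
      (-1 : R) ^ (n * (n - 1) / 2) * M.det := by
  set B := Matrix.reindex (sumEquiv n) (sumEquiv n) (Matrix.fromBlocks 0 M (-Mᵀ) 0) with hB
  have hBentry : ∀ x y, B (sumEquiv n x) (sumEquiv n y) =
      Matrix.fromBlocks 0 M (-Mᵀ) 0 x y := by
    intro x y
    simp [hB, Matrix.reindex_apply]
  constructor
  · ext i j
    obtain ⟨x, rfl⟩ := (sumEquiv n).surjective i
    obtain ⟨y, rfl⟩ := (sumEquiv n).surjective j
    rw [Matrix.transpose_apply, Matrix.neg_apply, hBentry, hBentry]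
    rcases x with a | a <;> rcases y with b | b <;>
      simp [Matrix.fromBlocks]
  · have hfst : ∀ (π : Equiv.Perm (Fin n)) (k : Fin n),
        B (Phi π (pairFst k)) (Phi π (pairSnd k)) = M k (π k) := by
      intro π k
      rw [Phi_fst, Phi_snd, hBentry]
      simp
    have hzeroEntry : ∀ i j : Fin (2 * n),
        ((i.val < n ∧ j.val < n) ∨ (n ≤ i.val ∧ n ≤ j.val)) → B i j = 0 := by
      intro i j hij
      obtain ⟨x, rfl⟩ := (sumEquiv n).surjective i
      obtain ⟨y, rfl⟩ := (sumEquiv n).surjective j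
      rw [hBentry]
      rcases x with a | a <;> rcases y with b | b
      · simp
      · exfalso
        have h1 := sumEquiv_inl_val a
        have h2 := sumEquiv_inr_val b
        have := a.isLt
        omega
      · exfalso
        have h1 := sumEquiv_inr_val a
        have h2 := sumEquiv_inl_val b
        have := b.isLt
        omega
      · simp
    have hnotim : ∀ σ : Equiv.Perm (Fin (2 * n)), IsPairNormal σ →
        σ ∉ Finset.univ.image (Phi (n := n)) →
        ∏ k : Fin n, B (σ (pairFst k)) (σ (pairSnd k)) = 0 := by
      intro σ hσ him
      by_cases hmix : ∀ k : Fin n, (σ (pairFst k)).val < n ∧ n ≤ (σ (pairSnd k)).val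
      · exfalso
        apply him
        set g : Fin n → Fin n := fun k => (⟨(σ (pairFst k)).val, (hmix k).1⟩ : Fin n) with hgdef
        have hg : StrictMono g := by
          intro k l hkl
          have := hσ.2 k l hkl
          rw [Fin.lt_def] at this ⊢
          exact this
        have hgid : g = id := by
          haveI : WellFoundedLT (Fin n) := inferInstance
          refine (hg.range_inj strictMono_id).1 ?_
          rw [Set.range_id]
          exact Set.range_eq_univ.mpr (Finite.surjective_of_injective hg.injective)
        have hfsteq : ∀ k : Fin n, (σ (pairFst k)).val = k.val := by
          intro k
          exact congrArg Fin.val (congrFun hgid k)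
        set h : Fin n → Fin n := fun k =>
          (⟨(σ (pairSnd k)).val - n, by have := (σ (pairSnd k)).isLt; omega⟩ : Fin n) with hhdef
        have hinj : Function.Injective h := by
          intro k l hkl
          have hv : (h k).val = (h l).val := congrArg Fin.val hkl
          have hvk : (h k).val = (σ (pairSnd k)).val - n := rfl
          have hvl : (h l).val = (σ (pairSnd l)).val - n := rfl
          have hk2 := (hmix k).2
          have hl2 := (hmix l).2
          have heq : σ (pairSnd k) = σ (pairSnd l) := Fin.ext (by omega)
          have := σ.injective heq
          have hv2 := congrArg Fin.val this
          have : (pairSnd k).val = 2 * k.val + 1 := rfl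
          exact Fin.ext (by simp only [pairSnd] at hv2; omega)
        have hbij : Function.Bijective h := ⟨hinj, Finite.surjective_of_injective hinj⟩
        set π := Equiv.ofBijective h hbij with hπdef
        refine Finset.mem_image.mpr ⟨π, Finset.mem_univ _, ?_⟩
        symm
        apply Equiv.ext
        intro x
        obtain ⟨y, rfl⟩ := (interEquiv n).surjective x
        rcases y with k | k
        · rw [interEquiv_inl, Phi_fst]
          exact Fin.ext (by rw [sumEquiv_inl_val, hfsteq k])
        · rw [interEquiv_inr, Phi_snd]
          refine Fin.ext ?_
          rw [sumEquiv_inr_val]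
          have hk2 := (hmix k).2
          show (σ (pairSnd k)).val = n + ((σ (pairSnd k)).val - n)
          omega
      · push_neg at hmix
        obtain ⟨k, hk⟩ := hmix
        apply Finset.prod_eq_zero (Finset.mem_univ k)
        have hlt : (σ (pairFst k)).val < (σ (pairSnd k)).val := Fin.lt_def.mp (hσ.1 k)
        apply hzeroEntry
        have h1 := (σ (pairFst k)).isLt
        have h2 := (σ (pairSnd k)).isLt
        omega
    have hsub : (Finset.univ.image (Phi (n := n))) ⊆
        Finset.univ.filter (fun σ : Equiv.Perm (Fin (2 * n)) => IsPairNormal σ) := by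
      intro σ hσ
      obtain ⟨π, _, rfl⟩ := Finset.mem_image.mp hσ
      exact Finset.mem_filter.mpr ⟨Finset.mem_univ _, Phi_pairNormal π⟩
    rw [Matrix.pff]
    rw [← Finset.sum_subset hsub (fun σ hσf hσim => by
      rw [hnotim σ (Finset.mem_filter.mp hσf).2 hσim, smul_zero])]
    rw [Finset.sum_image (fun π _ π' _ h => Phi_injective h)]
    have hterm : ∀ π : Equiv.Perm (Fin n),
        ((Equiv.Perm.sign (Phi π) : ℤ) •
            ∏ k : Fin n, B (Phi π (pairFst k)) (Phi π (pairSnd k))) =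
          (-1 : R) ^ (n * (n - 1) / 2) *
            ((Equiv.Perm.sign π : ℤ) • ∏ k : Fin n, M k (π k)) := by
      intro π
      have hprod : ∏ k : Fin n, B (Phi π (pairFst k)) (Phi π (pairSnd k)) =
          ∏ k : Fin n, M k (π k) := Finset.prod_congr rfl fun k _ => hfst π k
      rw [hprod, sign_Phi]
      have hcast : (((-1) ^ (n * (n - 1) / 2) * Equiv.Perm.sign π : ℤˣ) : ℤ) =
          (-1 : ℤ) ^ (n * (n - 1) / 2) * (Equiv.Perm.sign π : ℤ) := by push_cast; ring
      rw [hcast, mul_smul, zsmul_eq_mul]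
      congr 1
      push_cast
      ring
    rw [Finset.sum_congr rfl fun π _ => hterm π, ← Finset.mul_sum]
    congr 1
    rw [← Matrix.det_transpose M, Matrix.det_apply]
    apply Finset.sum_congr rfl
    intro π _
    rw [Units.smul_def]
    rfl
end

section
/- A graph G with an even number of vertices admits a perfect matching if and only if for some (equivalently, any) orientation G⃗ of G, the determinant of the weighted skew-symmetric adjacency matrix B_{G⃗}(z), viewed as a polynomial in the edge variables z_e, is nonzero. -/
open Matrix

/-- `ε` is the sign function of an orientation (with no oriented 2-cycles) of the
multigraph with edge multiplicities `m`: it is antisymmetric, equals `±1` on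
pairs joined by an edge, and `0` otherwise. -/
def IsOrientation {V : Type*} (m : V → V → ℕ) (ε : V → V → ℤ) : Prop :=
  (∀ i j, ε j i = -ε i j) ∧ (∀ i j, m i j ≠ 0 → ε i j = 1 ∨ ε i j = -1) ∧
    (∀ i j, m i j = 0 → ε i j = 0)

/-- The weighted skew-symmetric adjacency matrix `B_{G⃗}(z)`: its `(i,j)` entry is
`ε(i,j)·m(i,j)·z_{ij}`, where `z_e` is the formal variable of the edge `e` of the
underlying simple graph. -/
noncomputable def weightedSkewAdj {V : Type*} (m : V → V → ℕ) (ε : V → V → ℤ) :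
    Matrix V V (MvPolynomial (Sym2 V) ℤ) :=
  fun i j => (ε i j * (m i j : ℤ)) • MvPolynomial.X s(i, j)

/-- The number of perfect matchings of the multigraph with multiplicities `m`
(each matching of the underlying simple graph, encoded as a fixed-point-free
involution along edges, is counted with multiplicity `∏ m(e)`). -/
def matchCountW {n : ℕ} (m : Fin n → Fin n → ℕ) : ℕ :=
  ∑ f ∈ Finset.univ.filter (fun f : Fin n → Fin n =>
      (∀ i, f (f i) = i) ∧ ∀ i, f i ≠ i ∧ m i (f i) ≠ 0),
    ∏ i ∈ Finset.univ.filter (fun i => i < f i), m i (f i)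

open Equiv Equiv.Perm Finset

theorem Equiv.Perm.apply_inv_self {α : Type*} (f : Equiv.Perm α) (x : α) : f (f⁻¹ x) = x :=
  Equiv.apply_symm_apply f x

theorem Equiv.Perm.inv_apply_self {α : Type*} (f : Equiv.Perm α) (x : α) : f⁻¹ (f x) = x :=
  Equiv.symm_apply_apply f x

theorem Equiv.Perm.sameCycle_inv_apply_right {α : Type*} {f : Equiv.Perm α} {x y : α} :
    f.SameCycle x (f⁻¹ y) ↔ f.SameCycle x y :=
  sameCycle_symm_apply_right

section Rev
variable {α : Type*} [Fintype α] [DecidableEq α]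

/-- reverse the cycle of `x` in `σ`. -/
def revAt (σ : Equiv.Perm α) (x : α) : Equiv.Perm α :=
  σ * (σ.cycleOf x)⁻¹ * (σ.cycleOf x)⁻¹

lemma cycleOf_inv_apply (σ : Equiv.Perm α) (x y : α) :
    (σ.cycleOf x)⁻¹ y = if σ.SameCycle x y then σ⁻¹ y else y := by
  simp [cycleOf_inv, cycleOf_apply, sameCycle_inv]

lemma revAt_apply (σ : Equiv.Perm α) (x y : α) :
    revAt σ x y = if σ.SameCycle x y then σ⁻¹ y else σ y := by
  simp only [revAt, mul_apply, cycleOf_inv_apply]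
  by_cases h : σ.SameCycle x y
  · have h1 : σ.SameCycle x (σ⁻¹ y) := sameCycle_inv_apply_right.mpr h
    simp [h, h1, sameCycle_inv_apply_right.mpr h1]
  · rw [if_neg h, if_neg h, if_neg h]

lemma sameCycle_pow_right' (σ : Equiv.Perm α) (x y : α) (k : ℕ) :
    σ.SameCycle x ((σ ^ k) y) ↔ σ.SameCycle x y := by
  induction k with
  | zero => simp
  | succ k ih => rw [pow_succ', mul_apply, sameCycle_apply_right, ih]

lemma sameCycle_invpow_right' (σ : Equiv.Perm α) (x y : α) (k : ℕ) :
    σ.SameCycle x ((σ⁻¹ ^ k) y) ↔ σ.SameCycle x y := by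
  induction k with
  | zero => simp
  | succ k ih => rw [pow_succ', mul_apply, sameCycle_inv_apply_right, ih]

lemma revAt_pow_apply (σ : Equiv.Perm α) (x y : α) (k : ℕ) :
    (revAt σ x ^ k) y = if σ.SameCycle x y then (σ⁻¹ ^ k) y else (σ ^ k) y := by
  induction k with
  | zero => simp
  | succ k ih =>
    rw [pow_succ', mul_apply, ih]
    by_cases h : σ.SameCycle x y
    · rw [if_pos h, if_pos h, revAt_apply, if_pos ((sameCycle_invpow_right' σ x y k).mpr h),
        pow_succ', mul_apply]
    · rw [if_neg h, if_neg h, revAt_apply, if_neg, pow_succ', mul_apply]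
      rw [sameCycle_pow_right']
      exact h

lemma sameCycle_revAt (σ : Equiv.Perm α) (x a b : α) :
    (revAt σ x).SameCycle a b ↔ σ.SameCycle a b := by
  constructor
  · rintro h
    obtain ⟨k, -, hk⟩ := h.exists_pow_eq'
    rw [revAt_pow_apply] at hk
    by_cases hs : σ.SameCycle x a
    · rw [if_pos hs] at hk
      exact sameCycle_inv.mp ⟨k, by rw [zpow_natCast]; exact hk⟩
    · rw [if_neg hs] at hk
      exact ⟨k, by rw [zpow_natCast]; exact hk⟩
  · intro h
    by_cases hs : σ.SameCycle x a
    · obtain ⟨k, -, hk⟩ := (sameCycle_inv.mpr h).exists_pow_eq'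
      exact ⟨k, by rw [zpow_natCast, revAt_pow_apply, if_pos hs]; exact hk⟩
    · obtain ⟨k, -, hk⟩ := h.exists_pow_eq'
      exact ⟨k, by rw [zpow_natCast, revAt_pow_apply, if_neg hs]; exact hk⟩

lemma revAt_fix (σ : Equiv.Perm α) (x y : α) : revAt σ x y = y ↔ σ y = y := by
  rw [revAt_apply]
  by_cases h : σ.SameCycle x y
  · rw [if_pos h]
    constructor
    · intro h1; conv_lhs => rw [← h1]
      simp
    · intro h1
      exact σ.injective (by rw [apply_inv_self, h1])
  · rw [if_neg h]

lemma support_cycleOf_revAt (σ : Equiv.Perm α) (x a : α) :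
    ((revAt σ x).cycleOf a).support = (σ.cycleOf a).support := by
  ext y
  rw [mem_support_cycleOf_iff, mem_support_cycleOf_iff, sameCycle_revAt, mem_support,
    mem_support, ne_eq, ne_eq, revAt_fix]

end Rev

section Bad
variable {A : Type*} [Fintype A] [DecidableEq A] [LinearOrder A]

/-- elements in a "bad" (fixed or odd) cycle. -/
def badSet (s : Equiv.Perm A) : Finset A :=
  Finset.univ.filter (fun i => s i = i ∨ Odd ((s.cycleOf i).support.card))

lemma badSet_revAt (s : Equiv.Perm A) (x : A) : badSet (revAt s x) = badSet s := by
  unfold badSet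
  ext i
  simp only [mem_filter, mem_univ, true_and, support_cycleOf_revAt]
  rw [revAt_fix]

lemma revAt_revAt (s : Equiv.Perm A) (x : A) : revAt (revAt s x) x = s := by
  ext y
  rw [revAt_apply]
  simp only [sameCycle_revAt]
  by_cases hy : s.SameCycle x y
  · rw [if_pos hy]
    have h2 : revAt s x (s y) = y := by
      rw [revAt_apply, if_pos (hy.trans (sameCycle_apply_right.mpr (Equiv.Perm.SameCycle.refl _ _))),
        inv_apply_self]
    exact Equiv.Perm.inv_eq_iff_eq.mpr h2.symm
  · rw [if_neg hy, revAt_apply, if_neg hy]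

/-- the cancelling involution -/
noncomputable def gInv (s : Equiv.Perm A) : Equiv.Perm A :=
  if h : (badSet s).Nonempty then revAt s ((badSet s).min' h) else s

lemma badSet_gInv (s : Equiv.Perm A) : badSet (gInv s) = badSet s := by
  unfold gInv
  split_ifs with h
  · exact badSet_revAt s _
  · rfl

lemma gInv_gInv (s : Equiv.Perm A) : gInv (gInv s) = s := by
  by_cases h : (badSet s).Nonempty
  · have h1 : gInv s = revAt s ((badSet s).min' h) := dif_pos h
    have h2 : (badSet (gInv s)).Nonempty := by rw [badSet_gInv]; exact h
    have h3 : (badSet (gInv s)).min' h2 = (badSet s).min' h := by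
      congr 1
      exact badSet_gInv s
    rw [gInv, dif_pos h2, h3, h1, revAt_revAt]
  · have h1 : gInv s = s := dif_neg h
    rw [gInv, h1, dif_neg h]

lemma sign_revAt (s : Equiv.Perm A) (x : A) : Equiv.Perm.sign (revAt s x) = Equiv.Perm.sign s := by
  unfold revAt
  rw [_root_.map_mul, _root_.map_mul, mul_assoc, Int.units_mul_self, mul_one]

end Bad

section Det
variable {A : Type*} [Fintype A] [DecidableEq A] [LinearOrder A] {R : Type*} [CommRing R]

lemma prod_revAt (s : Equiv.Perm A) (x : A) (M : Matrix A A R)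
    (hskew : ∀ i j, M j i = -M i j) (hx : s x ≠ x)
    (hodd : Odd ((s.cycleOf x).support.card)) :
    ∏ i, M (revAt s x i) i = -∏ i, M (s i) i := by
  classical
  have hsplit1 := Finset.prod_filter_mul_prod_filter_not Finset.univ
    (fun i => s.SameCycle x i) (fun i => M (revAt s x i) i)
  have hsplit2 := Finset.prod_filter_mul_prod_filter_not Finset.univ
    (fun i => s.SameCycle x i) (fun i => M (s i) i)
  set T := Finset.univ.filter (fun i => s.SameCycle x i) with hT
  have hTcard : T.card = (s.cycleOf x).support.card := by
    congr 1
    ext y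
    simp [hT, mem_support_cycleOf_iff' hx]
  have hmemT : ∀ i, i ∈ T ↔ s.SameCycle x i := by
    intro i; simp [hT]
  -- on T, revAt is s⁻¹
  have e1 : ∏ i ∈ T, M (revAt s x i) i = ∏ i ∈ T, M (s⁻¹ i) i := by
    apply Finset.prod_congr rfl
    intro i hi
    rw [revAt_apply, if_pos ((hmemT i).mp hi)]
  -- reindex
  have e2 : ∏ i ∈ T, M (s⁻¹ i) i = ∏ j ∈ T, M j (s j) := by
    apply Finset.prod_nbij' (fun a => s⁻¹ a) (fun a => s a)
    · intro a ha
      rw [hmemT] at ha ⊢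
      exact sameCycle_inv_apply_right.mpr ha
    · intro a ha
      rw [hmemT] at ha ⊢
      exact sameCycle_apply_right.mpr ha
    · intro a _; simp
    · intro a _; simp
    · intro a _
      rw [apply_inv_self]
  have e3 : ∏ j ∈ T, M j (s j) = (-1) ^ T.card * ∏ j ∈ T, M (s j) j := by
    rw [← Finset.prod_const, ← Finset.prod_mul_distrib]
    apply Finset.prod_congr rfl
    intro j _
    rw [hskew, neg_one_mul]
  have e4 : ∏ i ∈ Finset.univ.filter (fun i => ¬ s.SameCycle x i), M (revAt s x i) i
      = ∏ i ∈ Finset.univ.filter (fun i => ¬ s.SameCycle x i), M (s i) i := by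
    apply Finset.prod_congr rfl
    intro i hi
    rw [Finset.mem_filter] at hi
    rw [revAt_apply, if_neg hi.2]
  have hneg : ((-1 : R)) ^ T.card = -1 := by
    rw [hTcard] at *
    exact Odd.neg_one_pow hodd
  calc ∏ i, M (revAt s x i) i
      = (∏ i ∈ T, M (revAt s x i) i) *
        ∏ i ∈ Finset.univ.filter (fun i => ¬ s.SameCycle x i), M (revAt s x i) i := hsplit1.symm
    _ = (-1 * ∏ j ∈ T, M (s j) j) *
        ∏ i ∈ Finset.univ.filter (fun i => ¬ s.SameCycle x i), M (s i) i := by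
        rw [e1, e2, e3, e4, hneg]
    _ = -∏ i, M (s i) i := by
        rw [neg_one_mul, neg_mul, hsplit2]

lemma det_cancel (M : Matrix A A R) (hskew : ∀ i j, M j i = -M i j) (hdiag : ∀ i, M i i = 0) :
    M.det = ∑ s ∈ Finset.univ.filter (fun s : Equiv.Perm A => ¬(badSet s).Nonempty),
      Equiv.Perm.sign s • ∏ i, M (s i) i := by
  classical
  rw [Matrix.det_apply,
    ← Finset.sum_filter_add_sum_filter_not Finset.univ
      (fun s : Equiv.Perm A => (badSet s).Nonempty)
      (fun s : Equiv.Perm A => Equiv.Perm.sign s • ∏ i, M (s i) i)]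
  have hzero : ∑ s ∈ Finset.univ.filter (fun s : Equiv.Perm A => (badSet s).Nonempty),
      Equiv.Perm.sign s • ∏ i, M (s i) i = 0 := by
    apply Finset.sum_involution (fun s _ => gInv s)
    · -- cancellation
      intro s hs
      rw [Finset.mem_filter] at hs
      have hne : (badSet s).Nonempty := hs.2
      set x := (badSet s).min' hne with hxdef
      have hx : x ∈ badSet s := Finset.min'_mem _ hne
      rw [badSet, Finset.mem_filter] at hx
      have hg : gInv s = revAt s x := dif_pos hne
      by_cases hfix : s x = x
      · -- fixed point: both terms are zero
        have hrev : revAt s x = s := by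
          unfold revAt
          rw [(Equiv.Perm.cycleOf_eq_one_iff s).mpr hfix]
          simp
        have hprod : ∏ i, M (s i) i = 0 :=
          Finset.prod_eq_zero (Finset.mem_univ x) (by rw [hfix, hdiag])
        rw [hg, hrev, hprod, smul_zero, add_zero]
      · have hodd : Odd ((s.cycleOf x).support.card) := hx.2.resolve_left hfix
        rw [hg, sign_revAt, prod_revAt s x M hskew hfix hodd, smul_neg, add_neg_cancel]
    · -- nontrivial when term nonzero
      intro s hs hterm
      have hfix : ∀ i, s i ≠ i := by
        intro i hi
        apply hterm
        have : ∏ i, M (s i) i = 0 :=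
          Finset.prod_eq_zero (Finset.mem_univ i) (by rw [hi, hdiag])
        rw [this, smul_zero]
      rw [Finset.mem_filter] at hs
      have hne : (badSet s).Nonempty := hs.2
      set x := (badSet s).min' hne with hxdef
      have hx : x ∈ badSet s := Finset.min'_mem _ hne
      rw [badSet, Finset.mem_filter] at hx
      have hodd : Odd ((s.cycleOf x).support.card) := hx.2.resolve_left (hfix x)
      have hg : gInv s = revAt s x := dif_pos hne
      intro hcon
      have h2 : s⁻¹ x = s x := by
        have h3 : revAt s x x = s x := by rw [← hg, hcon]
        rw [revAt_apply, if_pos (Equiv.Perm.SameCycle.refl s x)] at h3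
        exact h3
      have hx2 : (s ^ 2) x = x := by
        have : s (s x) = s (s⁻¹ x) := by rw [h2]
        rw [apply_inv_self] at this
        rw [pow_two, Equiv.Perm.mul_apply, this]
      have hmem : x ∈ (s.cycleOf x).support :=
        (mem_support_cycleOf_iff' (hfix x)).mpr (Equiv.Perm.SameCycle.refl s x)
      have hdvd : (s.cycleOf x).support.card ∣ 2 :=
        ((isCycleOn_support_cycleOf s x).pow_apply_eq hmem).mp hx2
      rcases (Nat.prime_two.eq_one_or_self_of_dvd _ hdvd) with h1 | h1
      · have : (s ^ 1) x = x :=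
          ((isCycleOn_support_cycleOf s x).pow_apply_eq hmem).mpr (by rw [h1])
        simp only [pow_one] at this
        exact hfix x this
      · rw [h1] at hodd
        exact absurd hodd (by decide)
    · intro s _
      exact gInv_gInv s
    · -- g maps into s
      intro s hs
      rw [Finset.mem_filter] at hs ⊢
      refine ⟨Finset.mem_univ _, ?_⟩
      rw [badSet_gInv]
      exact hs.2
  rw [hzero, zero_add]

end Det

section Match
variable {A : Type*} [Fintype A] [DecidableEq A] [LinearOrder A]

lemma modeq_eq_of_lt {a b L : ℕ} (h : a ≡ b [MOD L]) (ha : a < L) (hb : b < L) : a = b := by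
  have h2 := h
  unfold Nat.ModEq at h2
  rwa [Nat.mod_eq_of_lt ha, Nat.mod_eq_of_lt hb] at h2

lemma exists_matching_of_even (s : Equiv.Perm A) (hfix : ∀ i, s i ≠ i)
    (heven : ∀ i, ¬ Odd ((s.cycleOf i).support.card)) :
    ∃ f : A → A, (∀ i, f (f i) = i) ∧ (∀ i, f i ≠ i ∧ (f i = s i ∨ f i = s⁻¹ i)) := by
  classical
  have hne : ∀ i, (s.cycleOf i).support.Nonempty :=
    fun i => support_cycleOf_nonempty.mpr (hfix i)
  set b : A → A := fun i => (s.cycleOf i).support.min' (hne i) with hb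
  have hbmem : ∀ i, b i ∈ (s.cycleOf i).support := fun i => Finset.min'_mem _ _
  have hsame : ∀ i, s.SameCycle i (b i) :=
    fun i => (mem_support_cycleOf_iff' (hfix i)).mp (hbmem i)
  have hex : ∀ i, ∃ k : ℕ, (s ^ k) (b i) = i := by
    intro i
    obtain ⟨k, -, hk⟩ := (hsame i).symm.exists_pow_eq'
    exact ⟨k, hk⟩
  set d : A → ℕ := fun i => Nat.find (hex i) with hd
  have hds : ∀ i, (s ^ d i) (b i) = i := fun i => Nat.find_spec (hex i)
  set L : A → ℕ := fun i => (s.cycleOf i).support.card with hL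
  have hLpos : ∀ i, 0 < L i := fun i => Finset.card_pos.mpr (hne i)
  have hLeven : ∀ i, Even (L i) := fun i => Nat.not_odd_iff_even.mp (heven i)
  have hsupp_s : ∀ i, (s.cycleOf (s i)).support = (s.cycleOf i).support := by
    intro i
    rw [← Equiv.Perm.SameCycle.cycleOf_eq (⟨1, by simp⟩ : s.SameCycle i (s i))]
  have hsupp_si : ∀ i, (s.cycleOf (s⁻¹ i)).support = (s.cycleOf i).support := by
    intro i
    rw [← Equiv.Perm.SameCycle.cycleOf_eq (⟨-1, by simp⟩ : s.SameCycle i (s⁻¹ i))]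
  have hbs : ∀ i, b (s i) = b i := by
    intro i
    simp only [hb]
    congr 1
    exact hsupp_s i
  have hbsi : ∀ i, b (s⁻¹ i) = b i := by
    intro i
    simp only [hb]
    congr 1
    exact hsupp_si i
  have hLs : ∀ i, L (s i) = L i := by
    intro i; simp only [hL]; rw [hsupp_s i]
  have hLsi : ∀ i, L (s⁻¹ i) = L i := by
    intro i; simp only [hL]; rw [hsupp_si i]
  have key : ∀ (i : A) (p q : ℕ), ((s ^ p) (b i) = (s ^ q) (b i)) ↔ p ≡ q [MOD L i] :=
    fun i p q => (isCycleOn_support_cycleOf s i).pow_apply_eq_pow_apply (hbmem i)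
  have hdlt : ∀ i, d i < L i := by
    intro i
    have h1 : (s ^ (d i % L i)) (b i) = i := by
      rw [(key i _ _).mpr (Nat.mod_modEq _ _)]
      exact hds i
    exact lt_of_le_of_lt (Nat.find_min' (hex i) h1) (Nat.mod_lt _ (hLpos i))
  have hkeyB : ∀ i, d (s i) = (d i + 1) % L i := by
    intro i
    have h1 : (s ^ (d i + 1)) (b i) = s i := by
      rw [pow_succ', Equiv.Perm.mul_apply, hds]
    have h5 : (s ^ ((d i + 1) % L i)) (b i) = s i := by
      rw [(key i _ _).mpr (Nat.mod_modEq _ _)]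
      exact h1
    have h3 : (s ^ (d (s i))) (b i) = s i := by
      rw [← hbs i]
      exact hds (s i)
    have h4 : d (s i) ≡ (d i + 1) % L i [MOD L i] :=
      (key i _ _).mp (h3.trans h5.symm)
    have h6 : d (s i) < L i := by
      rw [← hLs i]
      exact hdlt (s i)
    exact modeq_eq_of_lt h4 h6 (Nat.mod_lt _ (hLpos i))
  have hkeyC : ∀ i, d i = (d (s⁻¹ i) + 1) % L i := by
    intro i
    have := hkeyB (s⁻¹ i)
    rw [Equiv.Perm.apply_inv_self, hLsi i] at this
    exact this
  refine ⟨fun i => if Even (d i) then s i else s⁻¹ i, ?_, ?_⟩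
  · intro i
    dsimp only
    by_cases he : Even (d i)
    · rw [if_pos he]
      have h1 : d i + 1 < L i := by
        rcases Nat.lt_or_ge (d i + 1) (L i) with h | h
        · exact h
        · exfalso
          have h2 : d i + 1 = L i := le_antisymm (hdlt i) h
          have := hLeven i
          rw [← h2] at this
          rcases he with ⟨a, ha⟩
          rcases this with ⟨c, hc⟩
          omega
      have h2 : d (s i) = d i + 1 := by
        rw [hkeyB i, Nat.mod_eq_of_lt h1]
      have h3 : ¬ Even (d (s i)) := by
        rw [h2]
        rcases he with ⟨a, ha⟩
        intro ⟨c, hc⟩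
        omega
      rw [if_neg h3, Equiv.Perm.inv_apply_self]
    · rw [if_neg he]
      have ha : d (s⁻¹ i) < L i := by
        rw [← hLsi i]
        exact hdlt (s⁻¹ i)
      have h1 : d (s⁻¹ i) + 1 < L i := by
        rcases Nat.lt_or_ge (d (s⁻¹ i) + 1) (L i) with h | h
        · exact h
        · exfalso
          have h2 : d (s⁻¹ i) + 1 = L i := le_antisymm ha h
          have h3 : d i = 0 := by
            rw [hkeyC i, h2, Nat.mod_self]
          exact he (by rw [h3]; exact Even.zero)
      have h2 : d i = d (s⁻¹ i) + 1 := by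
        rw [hkeyC i, Nat.mod_eq_of_lt h1]
      have h3 : Even (d (s⁻¹ i)) := by
        rcases Nat.even_or_odd (d (s⁻¹ i)) with h | h
        · exact h
        · exfalso
          apply he
          rw [h2]
          rcases h with ⟨c, hc⟩
          exact ⟨c + 1, by omega⟩
      rw [if_pos h3, Equiv.Perm.apply_inv_self]
  · intro i
    dsimp only
    by_cases he : Even (d i)
    · rw [if_pos he]
      exact ⟨hfix i, Or.inl rfl⟩
    · rw [if_neg he]
      refine ⟨fun hcon => hfix i ?_, Or.inr rfl⟩
      conv_lhs => rw [← hcon]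
      rw [Equiv.Perm.apply_inv_self]

end Match

section Final
variable {n : ℕ} (m : Fin n → Fin n → ℕ) (ε : Fin n → Fin n → ℤ)

lemma wsa_skew (hε : IsOrientation m ε) (hsym : ∀ i j, m i j = m j i) :
    ∀ i j, weightedSkewAdj m ε j i = -weightedSkewAdj m ε i j := by
  intro i j
  rw [weightedSkewAdj, weightedSkewAdj]
  rw [hε.1 i j, hsym j i, Sym2.eq_swap, neg_mul, neg_smul]

lemma wsa_diag (hloop : ∀ i, m i i = 0) : ∀ i, weightedSkewAdj m ε i i = 0 := by
  intro i
  rw [weightedSkewAdj]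
  rw [hloop i]
  simp

lemma det_ne_zero_of_matching (hε : IsOrientation m ε) (hsym : ∀ i j, m i j = m j i)
    (f : Fin n → Fin n) (h1 : ∀ i, f (f i) = i) (h2 : ∀ i, f i ≠ i ∧ m i (f i) ≠ 0) :
    (weightedSkewAdj m ε).det ≠ 0 := by
  classical
  intro hdet
  set φ : Equiv.Perm (Fin n) := ⟨f, f, h1, h1⟩ with hφ
  set v : Sym2 (Fin n) → ℤ := fun e => if ∃ k, e = s(k, f k) then 1 else 0 with hv
  have hmap : (weightedSkewAdj m ε).map ⇑(MvPolynomial.eval v)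
      = Matrix.diagonal (fun i => ε i (f i) * (m i (f i) : ℤ)) * (φ.permMatrix ℤ) := by
    ext i j
    rw [Matrix.map_apply, Matrix.mul_apply]
    have hperm : ∀ a b : Fin n, φ.permMatrix ℤ a b = if f a = b then 1 else 0 := by
      intro a b
      simp [Equiv.Perm.permMatrix, PEquiv.toMatrix_apply, Equiv.toPEquiv_apply, Option.mem_def,
        hφ, Equiv.coe_fn_mk, eq_comm]
    have hdiagmul : ∑ k, Matrix.diagonal (fun i => ε i (f i) * (m i (f i) : ℤ)) i k *
        (φ.permMatrix ℤ) k j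
        = (ε i (f i) * (m i (f i) : ℤ)) * (φ.permMatrix ℤ) i j := by
      rw [Finset.sum_eq_single i]
      · rw [Matrix.diagonal_apply_eq]
      · intro k _ hk
        rw [Matrix.diagonal_apply_ne _ hk.symm, zero_mul]
      · intro h; exact absurd (Finset.mem_univ i) h
    rw [hdiagmul, hperm, weightedSkewAdj]
    rw [MvPolynomial.smul_eq_C_mul, _root_.map_mul, MvPolynomial.eval_C, MvPolynomial.eval_X]
    by_cases hj : f i = j
    · rw [if_pos hj, mul_one, ← hj, hv]
      dsimp only
      rw [if_pos ⟨i, rfl⟩, mul_one]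
    · rw [if_neg hj, mul_zero, hv]
      dsimp only
      rw [if_neg, mul_zero]
      rintro ⟨k, hk⟩
      rw [Sym2.eq_iff] at hk
      rcases hk with ⟨hik, hjk⟩ | ⟨hik, hjk⟩
      · exact hj (by rw [hik, ← hjk])
      · apply hj
        rw [hik, h1 k, hjk]
  have hev := (MvPolynomial.eval v).map_det (weightedSkewAdj m ε)
  rw [hdet, map_zero, RingHom.mapMatrix_apply, hmap, Matrix.det_mul, Matrix.det_diagonal, Matrix.det_permutation] at hev
  have hne : (∏ i, (ε i (f i) * (m i (f i) : ℤ))) * (Equiv.Perm.sign φ : ℤ) ≠ 0 := by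
    apply mul_ne_zero
    · apply Finset.prod_ne_zero_iff.mpr
      intro i _
      apply mul_ne_zero
      · rcases hε.2.1 i (f i) (h2 i).2 with h | h <;> rw [h] <;> norm_num
      · exact_mod_cast (h2 i).2
    · exact Units.ne_zero _
  exact hne hev.symm

lemma matching_of_det_ne_zero' (hε : IsOrientation m ε) (hloop : ∀ i, m i i = 0)
    (hsym : ∀ i j, m i j = m j i) (hdet : (weightedSkewAdj m ε).det ≠ 0) :
    ∃ f : Fin n → Fin n, (∀ i, f (f i) = i) ∧ ∀ i, f i ≠ i ∧ m i (f i) ≠ 0 := by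
  classical
  rw [det_cancel _ (wsa_skew m ε hε hsym) (wsa_diag m ε hloop)] at hdet
  obtain ⟨s, hsmem, hterm⟩ := Finset.exists_ne_zero_of_sum_ne_zero hdet
  rw [Finset.mem_filter] at hsmem
  have hbad : badSet s = ∅ := Finset.not_nonempty_iff_eq_empty.mp hsmem.2
  have hprop : ∀ i : Fin n, ¬(s i = i ∨ Odd ((s.cycleOf i).support.card)) := by
    intro i hcon
    have hni := Finset.eq_empty_iff_forall_notMem.mp hbad i
    rw [badSet, Finset.mem_filter] at hni
    exact hni ⟨Finset.mem_univ i, hcon⟩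
  have hfix : ∀ i, s i ≠ i := fun i h => hprop i (Or.inl h)
  have heven : ∀ i, ¬ Odd ((s.cycleOf i).support.card) := fun i h => hprop i (Or.inr h)
  have hprod : ∏ i, weightedSkewAdj m ε (s i) i ≠ 0 := fun h => hterm (by rw [h, smul_zero])
  have hm : ∀ i, m (s i) i ≠ 0 := by
    intro i h0
    apply hprod
    apply Finset.prod_eq_zero (Finset.mem_univ i)
    rw [weightedSkewAdj]
    rw [hε.2.2 _ _ h0, h0]
    simp
  obtain ⟨f, hf1, hf2⟩ := exists_matching_of_even s hfix heven
  refine ⟨f, hf1, fun i => ⟨(hf2 i).1, ?_⟩⟩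
  rcases (hf2 i).2 with h | h
  · rw [h, hsym]
    exact hm i
  · rw [h]
    have h3 := hm (s⁻¹ i)
    rwa [Equiv.Perm.apply_inv_self] at h3

lemma exists_orientation (hloop : ∀ i, m i i = 0) (hsym : ∀ i j, m i j = m j i) :
    IsOrientation m (fun i j => if m i j = 0 then 0 else if i < j then 1 else -1) := by
  refine ⟨?_, ?_, ?_⟩
  · intro i j
    dsimp only
    by_cases h : m i j = 0
    · rw [if_pos h, if_pos (by rw [hsym]; exact h), neg_zero]
    · have hji : m j i ≠ 0 := by rw [hsym]; exact h
      rw [if_neg h, if_neg hji]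
      have hij : i ≠ j := by
        intro hcon
        exact h (by rw [hcon, hloop])
      rcases lt_trichotomy i j with hlt | heq | hgt
      · rw [if_pos hlt, if_neg (not_lt_of_gt hlt)]
      · exact absurd heq hij
      · rw [if_neg (not_lt_of_gt hgt), if_pos hgt]
        norm_num
  · intro i j h
    dsimp only
    rw [if_neg h]
    by_cases hlt : i < j
    · exact Or.inl (if_pos hlt)
    · exact Or.inr (if_neg hlt)
  · intro i j h
    exact if_pos h

end Final

/-- A graph with an even number of vertices admits a perfect matching iff for some
(equivalently, any) orientation, the determinant of the weighted skew-symmetric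
adjacency matrix is a nonzero polynomial in the edge variables. -/
theorem matching_iff_det_ne_zero (n : ℕ) (hn : Even n)
    (m : Fin n → Fin n → ℕ) (hloop : ∀ i, m i i = 0) (hsym : ∀ i j, m i j = m j i) :
    ((∃ f : Fin n → Fin n, (∀ i, f (f i) = i) ∧ ∀ i, f i ≠ i ∧ m i (f i) ≠ 0) ↔
      ∃ ε, IsOrientation m ε ∧ (weightedSkewAdj m ε).det ≠ 0) ∧
    ((∃ f : Fin n → Fin n, (∀ i, f (f i) = i) ∧ ∀ i, f i ≠ i ∧ m i (f i) ≠ 0) ↔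
      ∀ ε, IsOrientation m ε → (weightedSkewAdj m ε).det ≠ 0) := by
  have hε0 := exists_orientation m hloop hsym
  constructor
  · constructor
    · rintro ⟨f, h1, h2⟩
      exact ⟨_, hε0, det_ne_zero_of_matching m _ hε0 hsym f h1 h2⟩
    · rintro ⟨ε, hε, hdet⟩
      exact matching_of_det_ne_zero' m ε hε hloop hsym hdet
  · constructor
    · rintro ⟨f, h1, h2⟩ ε hε
      exact det_ne_zero_of_matching m ε hε hsym f h1 h2
    · intro h
      exact matching_of_det_ne_zero' m _ hε0 hloop hsym (h _ hε0)
end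

section
/- Let G be an even graph with a Pfaffian orientation G⃗. Then pff(B_{G⃗}(z)) = ± φ_G, i.e., the Pfaffian of the weighted adjacency matrix equals plus or minus the matching generating polynomial of G. -/
open Matrix

/-- The matching generating polynomial `φ_G` of the multigraph with multiplicities `m`:
the sum over perfect matchings of the underlying simple graph of
`(∏ m(e)) · ∏ z_e`, which counts matchings of the multigraph. -/
noncomputable def matchPolyW {n : ℕ} (m : Fin n → Fin n → ℕ) :
    MvPolynomial (Sym2 (Fin n)) ℤ :=
  ∑ f ∈ Finset.univ.filter (fun f : Fin n → Fin n =>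
      (∀ i, f (f i) = i) ∧ ∀ i, f i ≠ i ∧ m i (f i) ≠ 0),
    (∏ i ∈ Finset.univ.filter (fun i => i < f i), (m i (f i) : ℤ)) •
      ∏ i ∈ Finset.univ.filter (fun i => i < f i), MvPolynomial.X s(i, f i)

section PffAux

variable {k : ℕ}

/-- The within-pair swap on `Fin (2k)`: `2l ↦ 2l+1`, `2l+1 ↦ 2l`. -/
def tauF (k : ℕ) (i : Fin (2 * k)) : Fin (2 * k) :=
  ⟨if i.val % 2 = 0 then i.val + 1 else i.val - 1, by have := i.isLt; split <;> omega⟩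

lemma tauF_invol (k : ℕ) (i : Fin (2 * k)) : tauF k (tauF k i) = i := by
  unfold tauF
  ext
  simp only
  split_ifs <;> omega

lemma tauF_ne (k : ℕ) (i : Fin (2 * k)) : tauF k i ≠ i := by
  unfold tauF
  intro h
  have := congrArg Fin.val h
  simp only at this
  split_ifs at this <;> omega

lemma pairFst_eq (l : Fin k) : (pairFst l).val = 2 * l.val := rfl

lemma pairSnd_eq (l : Fin k) : (pairSnd l).val = 2 * l.val + 1 := rfl

lemma tauF_pairFst (l : Fin k) : tauF k (pairFst l) = pairSnd l := by
  ext
  show (if (2 * l.val) % 2 = 0 then 2 * l.val + 1 else 2 * l.val - 1) = 2 * l.val + 1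
  rw [if_pos (by omega)]

lemma tauF_pairSnd (l : Fin k) : tauF k (pairSnd l) = pairFst l := by
  ext
  show (if (2 * l.val + 1) % 2 = 0 then 2 * l.val + 1 + 1 else 2 * l.val + 1 - 1) = 2 * l.val
  rw [if_neg (by omega)]
  omega

lemma eq_pairFst_of_even (j : Fin (2 * k)) (h : j.val % 2 = 0) :
    j = pairFst ⟨j.val / 2, by have := j.isLt; omega⟩ := by
  ext
  show j.val = 2 * (j.val / 2)
  omega

lemma eq_pairSnd_of_odd (j : Fin (2 * k)) (h : j.val % 2 ≠ 0) :
    j = pairSnd ⟨j.val / 2, by have := j.isLt; omega⟩ := by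
  ext
  show j.val = 2 * (j.val / 2) + 1
  omega

/-- The fixed-point-free involution (matching) associated to a permutation. -/
def fOf (σ : Equiv.Perm (Fin (2 * k))) : Fin (2 * k) → Fin (2 * k) :=
  fun i => σ (tauF k (σ.symm i))

lemma fOf_apply_apply (σ : Equiv.Perm (Fin (2 * k))) (i : Fin (2 * k)) :
    fOf σ (fOf σ i) = i := by
  simp [fOf, tauF_invol]

lemma fOf_ne (σ : Equiv.Perm (Fin (2 * k))) (i : Fin (2 * k)) : fOf σ i ≠ i := by
  intro h
  have : σ (tauF k (σ.symm i)) = σ (σ.symm i) := by simpa [fOf] using h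
  exact tauF_ne k (σ.symm i) (σ.injective this)

lemma fOf_pairFst (σ : Equiv.Perm (Fin (2 * k))) (l : Fin k) :
    fOf σ (σ (pairFst l)) = σ (pairSnd l) := by
  simp [fOf, tauF_pairFst]

lemma fOf_pairSnd (σ : Equiv.Perm (Fin (2 * k))) (l : Fin k) :
    fOf σ (σ (pairSnd l)) = σ (pairFst l) := by
  simp [fOf, tauF_pairSnd]

lemma range_pairFst (σ : Equiv.Perm (Fin (2 * k))) (hσ : IsPairNormal σ) :
    Set.range (fun l : Fin k => σ (pairFst l)) = {i | i < fOf σ i} := by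
  ext i
  constructor
  · rintro ⟨l, rfl⟩
    have := hσ.1 l
    simp only [Set.mem_setOf_eq, fOf_pairFst]
    exact this
  · intro hi
    simp only [Set.mem_setOf_eq] at hi
    by_cases h : (σ.symm i).val % 2 = 0
    · refine ⟨⟨(σ.symm i).val / 2, by have := (σ.symm i).isLt; omega⟩, ?_⟩
      conv_rhs => rw [← σ.apply_symm_apply i, eq_pairFst_of_even (σ.symm i) h]
    · exfalso
      set l : Fin k := ⟨(σ.symm i).val / 2, by have := (σ.symm i).isLt; omega⟩ with hl
      have hj : σ.symm i = pairSnd l := eq_pairSnd_of_odd (σ.symm i) h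
      have hi' : i = σ (pairSnd l) := by rw [← hj, σ.apply_symm_apply]
      have : fOf σ i = σ (pairFst l) := by rw [hi', fOf_pairSnd]
      rw [this, hi'] at hi
      exact absurd (hσ.1 l) (not_lt.2 hi.le)

lemma card_S (f : Fin (2 * k) → Fin (2 * k)) (hinv : ∀ i, f (f i) = i)
    (hne : ∀ i, f i ≠ i) :
    (Finset.univ.filter (fun i => i < f i)).card = k := by
  have hbij : (Finset.univ.filter (fun i : Fin (2 * k) => i < f i)).card =
      (Finset.univ.filter (fun i : Fin (2 * k) => f i < i)).card := by
    apply Finset.card_bij (fun i _ => f i)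
    · intro a ha
      simp only [Finset.mem_filter, Finset.mem_univ, true_and] at ha ⊢
      rw [hinv a]; exact ha
    · intro a ha b hb hab
      have := congrArg f hab
      rwa [hinv a, hinv b] at this
    · intro b hb
      simp only [Finset.mem_filter, Finset.mem_univ, true_and] at hb ⊢
      exact ⟨f b, by rw [hinv b]; exact hb, hinv b⟩
  have hsplit := Finset.card_filter_add_card_filter_not
    (s := (Finset.univ : Finset (Fin (2 * k)))) (p := fun i => i < f i)
  have hcongr : Finset.univ.filter (fun i : Fin (2 * k) => ¬ i < f i) =
      Finset.univ.filter (fun i : Fin (2 * k) => f i < i) := by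
    apply Finset.filter_congr
    intro i _
    constructor
    · intro h; exact lt_of_le_of_ne (not_lt.1 h) (hne i)
    · intro h; exact not_lt.2 h.le
  rw [hcongr, ← hbij] at hsplit
  simp only [Finset.card_univ, Fintype.card_fin] at hsplit
  omega

/-- The increasing enumeration of the smaller endpoints of a matching. -/
noncomputable def sEnum (f : Fin (2 * k) → Fin (2 * k)) (hinv : ∀ i, f (f i) = i)
    (hne : ∀ i, f i ≠ i) : Fin k → Fin (2 * k) :=
  fun l => ((Finset.univ.filter (fun i => i < f i)).orderIsoOfFin (card_S f hinv hne) l : Fin (2 * k))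

lemma sEnum_lt (f : Fin (2 * k) → Fin (2 * k)) (hinv : ∀ i, f (f i) = i)
    (hne : ∀ i, f i ≠ i) (l : Fin k) : sEnum f hinv hne l < f (sEnum f hinv hne l) := by
  have h2 := ((Finset.univ.filter (fun i => i < f i)).orderIsoOfFin (card_S f hinv hne) l).2
  rw [Finset.mem_filter] at h2
  exact h2.2

lemma sEnum_strictMono (f : Fin (2 * k) → Fin (2 * k)) (hinv : ∀ i, f (f i) = i)
    (hne : ∀ i, f i ≠ i) : StrictMono (sEnum f hinv hne) := by
  intro a b hab
  have : ((Finset.univ.filter (fun i => i < f i)).orderIsoOfFin (card_S f hinv hne) a) <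
      ((Finset.univ.filter (fun i => i < f i)).orderIsoOfFin (card_S f hinv hne) b) :=
    (OrderIso.lt_iff_lt _).2 hab
  exact this

lemma range_sEnum (f : Fin (2 * k) → Fin (2 * k)) (hinv : ∀ i, f (f i) = i)
    (hne : ∀ i, f i ≠ i) : Set.range (sEnum f hinv hne) = {i | i < f i} := by
  ext i
  constructor
  · rintro ⟨l, rfl⟩
    exact sEnum_lt f hinv hne l
  · intro hi
    have hmem : i ∈ Finset.univ.filter (fun i => i < f i) := by
      simp [Finset.mem_filter]; exact hi
    refine ⟨((Finset.univ.filter (fun i => i < f i)).orderIsoOfFin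
      (card_S f hinv hne)).symm ⟨i, hmem⟩, ?_⟩
    simp [sEnum]

/-- The normalized permutation of a matching. -/
noncomputable def gFun (f : Fin (2 * k) → Fin (2 * k)) (hinv : ∀ i, f (f i) = i)
    (hne : ∀ i, f i ≠ i) : Fin (2 * k) → Fin (2 * k) :=
  fun j => if j.val % 2 = 0 then sEnum f hinv hne ⟨j.val / 2, by have := j.isLt; omega⟩
    else f (sEnum f hinv hne ⟨j.val / 2, by have := j.isLt; omega⟩)

lemma f_sEnum_not_lt (f : Fin (2 * k) → Fin (2 * k)) (hinv : ∀ i, f (f i) = i)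
    (hne : ∀ i, f i ≠ i) (l : Fin k) :
    ¬ (f (sEnum f hinv hne l) < f (f (sEnum f hinv hne l))) := by
  rw [hinv]
  exact not_lt.2 (sEnum_lt f hinv hne l).le

lemma gFun_bijective (f : Fin (2 * k) → Fin (2 * k)) (hinv : ∀ i, f (f i) = i)
    (hne : ∀ i, f i ≠ i) : Function.Bijective (gFun f hinv hne) := by
  rw [Fintype.bijective_iff_injective_and_card]
  refine ⟨?_, rfl⟩
  intro a b hab
  unfold gFun at hab
  have hse := sEnum_strictMono f hinv hne
  split_ifs at hab with h1 h2 h2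
  · have : (⟨a.val / 2, by have := a.isLt; omega⟩ : Fin k) = ⟨b.val / 2, by have := b.isLt; omega⟩ :=
      hse.injective hab
    have := congrArg Fin.val this
    simp only at this
    ext; omega
  · exfalso
    have h1' := sEnum_lt f hinv hne ⟨a.val / 2, by have := a.isLt; omega⟩
    rw [hab, hinv] at h1'
    exact absurd (sEnum_lt f hinv hne ⟨b.val / 2, by have := b.isLt; omega⟩)
      (not_lt.2 h1'.le)
  · exfalso
    have h1' := sEnum_lt f hinv hne ⟨b.val / 2, by have := b.isLt; omega⟩
    rw [← hab, hinv] at h1'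
    exact absurd (sEnum_lt f hinv hne ⟨a.val / 2, by have := a.isLt; omega⟩)
      (not_lt.2 h1'.le)
  · have : (⟨a.val / 2, by have := a.isLt; omega⟩ : Fin k) = ⟨b.val / 2, by have := b.isLt; omega⟩ := by
      apply hse.injective
      have := congrArg f hab
      rwa [hinv, hinv] at this
    have := congrArg Fin.val this
    simp only at this
    ext; omega

/-- `sigmaOf f` is the pair-normal permutation associated with the matching `f`. -/
noncomputable def sigmaOf (f : Fin (2 * k) → Fin (2 * k)) : Equiv.Perm (Fin (2 * k)) :=
  if h : (∀ i, f (f i) = i) ∧ (∀ i, f i ≠ i) then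
    Equiv.ofBijective (gFun f h.1 h.2) (gFun_bijective f h.1 h.2)
  else 1

lemma sigmaOf_apply (f : Fin (2 * k) → Fin (2 * k)) (hinv : ∀ i, f (f i) = i)
    (hne : ∀ i, f i ≠ i) (j : Fin (2 * k)) :
    sigmaOf f j = gFun f hinv hne j := by
  rw [sigmaOf, dif_pos ⟨hinv, hne⟩]
  rfl

lemma sigmaOf_pairFst (f : Fin (2 * k) → Fin (2 * k)) (hinv : ∀ i, f (f i) = i)
    (hne : ∀ i, f i ≠ i) (l : Fin k) :
    sigmaOf f (pairFst l) = sEnum f hinv hne l := by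
  rw [sigmaOf_apply f hinv hne]
  unfold gFun
  rw [if_pos (by rw [pairFst_eq]; omega)]
  congr 1
  ext
  show (pairFst l).val / 2 = l.val
  have := pairFst_eq l
  omega

lemma sigmaOf_pairSnd (f : Fin (2 * k) → Fin (2 * k)) (hinv : ∀ i, f (f i) = i)
    (hne : ∀ i, f i ≠ i) (l : Fin k) :
    sigmaOf f (pairSnd l) = f (sEnum f hinv hne l) := by
  rw [sigmaOf_apply f hinv hne]
  unfold gFun
  rw [if_neg (by rw [pairSnd_eq]; omega)]
  congr 2
  ext
  show (pairSnd l).val / 2 = l.val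
  have := pairSnd_eq l
  omega

lemma sigmaOf_pairNormal (f : Fin (2 * k) → Fin (2 * k)) (hinv : ∀ i, f (f i) = i)
    (hne : ∀ i, f i ≠ i) : IsPairNormal (sigmaOf f) := by
  constructor
  · intro l
    rw [sigmaOf_pairFst f hinv hne, sigmaOf_pairSnd f hinv hne]
    exact sEnum_lt f hinv hne l
  · intro a b hab
    rw [sigmaOf_pairFst f hinv hne, sigmaOf_pairFst f hinv hne]
    exact sEnum_strictMono f hinv hne hab

lemma fOf_sigmaOf (f : Fin (2 * k) → Fin (2 * k)) (hinv : ∀ i, f (f i) = i)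
    (hne : ∀ i, f i ≠ i) : fOf (sigmaOf f) = f := by
  have key : ∀ j, sigmaOf f (tauF k j) = f (sigmaOf f j) := by
    intro j
    by_cases h : j.val % 2 = 0
    · set l : Fin k := ⟨j.val / 2, by have := j.isLt; omega⟩ with hl
      have hj : j = pairFst l := eq_pairFst_of_even j h
      rw [hj, tauF_pairFst, sigmaOf_pairFst f hinv hne, sigmaOf_pairSnd f hinv hne]
    · set l : Fin k := ⟨j.val / 2, by have := j.isLt; omega⟩ with hl
      have hj : j = pairSnd l := eq_pairSnd_of_odd j h
      rw [hj, tauF_pairSnd, sigmaOf_pairFst f hinv hne, sigmaOf_pairSnd f hinv hne, hinv]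
  funext i
  unfold fOf
  rw [key (((sigmaOf f).symm) i), Equiv.apply_symm_apply]

lemma sigmaOf_fOf (σ : Equiv.Perm (Fin (2 * k))) (hσ : IsPairNormal σ) :
    sigmaOf (fOf σ) = σ := by
  have hinv := fOf_apply_apply σ
  have hne := fOf_ne σ
  have hsE : sEnum (fOf σ) hinv hne = fun l => σ (pairFst l) := by
    have h1 : StrictMono (sEnum (fOf σ) hinv hne) := sEnum_strictMono _ hinv hne
    have h2 : StrictMono (fun l : Fin k => σ (pairFst l)) := fun a b hab => hσ.2 a b hab
    exact (@StrictMono.range_inj (Fin k) (Fin (2 * k)) _ _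
      (inferInstance : WellFoundedLT (Fin k)) _ _ h1 h2).1
      (by rw [range_sEnum, range_pairFst σ hσ])
  apply Equiv.ext
  intro j
  by_cases h : j.val % 2 = 0
  · set l : Fin k := ⟨j.val / 2, by have := j.isLt; omega⟩ with hl
    have hj : j = pairFst l := eq_pairFst_of_even j h
    rw [hj, sigmaOf_pairFst (fOf σ) hinv hne]
    simp only [hsE]
  · set l : Fin k := ⟨j.val / 2, by have := j.isLt; omega⟩ with hl
    have hj : j = pairSnd l := eq_pairSnd_of_odd j h
    rw [hj, sigmaOf_pairSnd (fOf σ) hinv hne]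
    simp only [hsE]
    exact fOf_pairFst σ l

end PffAux

lemma prod_zsmul {R : Type*} [CommRing R] {ι : Type*} (s : Finset ι) (c : ι → ℤ) (p : ι → R) :
    ∏ i ∈ s, (c i • p i) = (∏ i ∈ s, c i) • ∏ i ∈ s, p i := by
  simp only [zsmul_eq_mul]
  rw [Finset.prod_mul_distrib, Int.cast_prod]

lemma pff_expand {R : Type*} [CommRing R] {k : ℕ} (m : Fin (2 * k) → Fin (2 * k) → ℕ)
    (hsym : ∀ i j, m i j = m j i)
    (A : Matrix (Fin (2 * k)) (Fin (2 * k)) R) (hA : ∀ i j, m i j = 0 → A i j = 0) :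
    A.pff = ∑ f ∈ Finset.univ.filter (fun f : Fin (2 * k) → Fin (2 * k) =>
        (∀ i, f (f i) = i) ∧ ∀ i, f i ≠ i ∧ m i (f i) ≠ 0),
      (Equiv.Perm.sign (sigmaOf f) : ℤ) •
        ∏ i ∈ Finset.univ.filter (fun i => i < f i), A i (f i) := by
  classical
  unfold Matrix.pff
  have hstep : ∑ σ ∈ Finset.univ.filter (fun σ : Equiv.Perm (Fin (2 * k)) => IsPairNormal σ),
      (Equiv.Perm.sign σ : ℤ) • ∏ l : Fin k, A (σ (pairFst l)) (σ (pairSnd l))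
      = ∑ σ ∈ Finset.univ.filter (fun σ : Equiv.Perm (Fin (2 * k)) =>
          IsPairNormal σ ∧ ∀ l : Fin k, m (σ (pairFst l)) (σ (pairSnd l)) ≠ 0),
        (Equiv.Perm.sign σ : ℤ) • ∏ l : Fin k, A (σ (pairFst l)) (σ (pairSnd l)) := by
    symm
    apply Finset.sum_subset
    · intro σ hσ
      simp only [Finset.mem_filter, Finset.mem_univ, true_and] at hσ ⊢
      exact hσ.1
    · intro σ hσ1 hσ2
      simp only [Finset.mem_filter, Finset.mem_univ, true_and] at hσ1 hσ2
      push_neg at hσ2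
      obtain ⟨l, hl⟩ := hσ2 hσ1
      rw [Finset.prod_eq_zero (Finset.mem_univ l) (hA _ _ hl)]
      simp
  rw [hstep]
  refine Finset.sum_bij' (fun σ _ => fOf σ) (fun f _ => sigmaOf f) ?_ ?_ ?_ ?_ ?_
  · -- membership of fOf σ
    intro σ hσ
    simp only [Finset.mem_filter, Finset.mem_univ, true_and] at hσ ⊢
    refine ⟨fOf_apply_apply σ, fun i => ⟨fOf_ne σ i, ?_⟩⟩
    by_cases hp : ((σ.symm i)).val % 2 = 0
    · set l : Fin k := ⟨(σ.symm i).val / 2, by have := (σ.symm i).isLt; omega⟩ with hl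
      have hi' : i = σ (pairFst l) := by
        conv_lhs => rw [← σ.apply_symm_apply i, eq_pairFst_of_even (σ.symm i) hp]
      rw [hi', fOf_pairFst]
      exact hσ.2 l
    · set l : Fin k := ⟨(σ.symm i).val / 2, by have := (σ.symm i).isLt; omega⟩ with hl
      have hi' : i = σ (pairSnd l) := by
        conv_lhs => rw [← σ.apply_symm_apply i, eq_pairSnd_of_odd (σ.symm i) hp]
      rw [hi', fOf_pairSnd, hsym]
      exact hσ.2 l
  · -- membership of sigmaOf f
    intro f hf
    simp only [Finset.mem_filter, Finset.mem_univ, true_and] at hf ⊢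
    have hinv := hf.1
    have hne : ∀ i, f i ≠ i := fun i => (hf.2 i).1
    refine ⟨sigmaOf_pairNormal f hinv hne, fun l => ?_⟩
    rw [sigmaOf_pairFst f hinv hne, sigmaOf_pairSnd f hinv hne]
    exact (hf.2 _).2
  · -- left inverse
    intro σ hσ
    simp only [Finset.mem_filter, Finset.mem_univ, true_and] at hσ
    exact sigmaOf_fOf σ hσ.1
  · -- right inverse
    intro f hf
    simp only [Finset.mem_filter, Finset.mem_univ, true_and] at hf
    exact fOf_sigmaOf f hf.1 (fun i => (hf.2 i).1)
  · -- values
    intro σ hσ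
    simp only [Finset.mem_filter, Finset.mem_univ, true_and] at hσ
    rw [sigmaOf_fOf σ hσ.1]
    congr 1
    refine Finset.prod_bij (fun l _ => σ (pairFst l)) ?_ ?_ ?_ ?_
    · intro l _
      simp only [Finset.mem_filter, Finset.mem_univ, true_and]
      rw [fOf_pairFst]
      exact hσ.1.1 l
    · intro a _ b _ hab
      have := σ.injective hab
      have := congrArg Fin.val this
      simp only [pairFst] at this
      ext; omega
    · intro i hi
      simp only [Finset.mem_filter, Finset.mem_univ, true_and] at hi
      have : i ∈ Set.range (fun l : Fin k => σ (pairFst l)) := by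
        rw [range_pairFst σ hσ.1]; exact hi
      obtain ⟨l, hl⟩ := this
      exact ⟨l, Finset.mem_univ l, hl⟩
    · intro l _
      show A (σ (pairFst l)) (σ (pairSnd l)) = A (σ (pairFst l)) (fOf σ (σ (pairFst l)))
      rw [fOf_pairFst]

lemma signs_const {ι : Type*} (M : Finset ι) (d w : ι → ℤ)
    (hd : ∀ f ∈ M, d f = 1 ∨ d f = -1) (hw : ∀ f ∈ M, 0 < w f)
    (habs : |∑ f ∈ M, d f * w f| = ∑ f ∈ M, w f) :
    (∀ f ∈ M, d f = 1) ∨ (∀ f ∈ M, d f = -1) := by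
  have hsum_nonneg : 0 ≤ ∑ f ∈ M, w f := Finset.sum_nonneg fun f hf => (hw f hf).le
  rcases (abs_eq hsum_nonneg).1 habs with hc | hc
  · left
    intro f hf
    have hz : ∑ g ∈ M, (1 - d g) * w g = 0 := by
      simp only [sub_mul, one_mul]
      rw [Finset.sum_sub_distrib, hc, sub_self]
    have hterm := (Finset.sum_eq_zero_iff_of_nonneg (fun g hg => mul_nonneg
      (by rcases hd g hg with h | h <;> rw [h] <;> norm_num) (hw g hg).le)).1 hz f hf
    rcases mul_eq_zero.1 hterm with h | h
    · linarith
    · exact absurd h (hw f hf).ne'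
  · right
    intro f hf
    have hz : ∑ g ∈ M, (1 + d g) * w g = 0 := by
      simp only [add_mul, one_mul]
      rw [Finset.sum_add_distrib, hc, add_neg_cancel]
    have hterm := (Finset.sum_eq_zero_iff_of_nonneg (fun g hg => mul_nonneg
      (by rcases hd g hg with h | h <;> rw [h] <;> norm_num) (hw g hg).le)).1 hz f hf
    rcases mul_eq_zero.1 hterm with h | h
    · linarith
    · exact absurd h (hw f hf).ne'

/-- For an even graph with a Pfaffian orientation (one for which `|pff(B(1))|` equals the
number of perfect matchings), the Pfaffian of the weighted adjacency matrix equals plus or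
minus the matching generating polynomial. -/
theorem pff_eq_pm_matchPoly_of_pfaffian_orientation (k : ℕ)
    (m : Fin (2 * k) → Fin (2 * k) → ℕ) (ε : Fin (2 * k) → Fin (2 * k) → ℤ)
    (hloop : ∀ i, m i i = 0) (hsym : ∀ i j, m i j = m j i)
    (hε : IsOrientation m ε)
    (hpfaff : |Matrix.pff (fun i j => ε i j * (m i j : ℤ))| = (matchCountW m : ℤ)) :
    (weightedSkewAdj m ε).pff = matchPolyW m ∨ (weightedSkewAdj m ε).pff = -matchPolyW m := by
  classical
  set M := Finset.univ.filter (fun f : Fin (2 * k) → Fin (2 * k) =>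
      (∀ i, f (f i) = i) ∧ ∀ i, f i ≠ i ∧ m i (f i) ≠ 0) with hMdef
  have hpffZ : Matrix.pff (fun i j => ε i j * (m i j : ℤ)) =
      ∑ f ∈ M,
        ((Equiv.Perm.sign (sigmaOf f) : ℤ) *
            ∏ i ∈ Finset.univ.filter (fun i => i < f i), ε i (f i)) *
          ∏ i ∈ Finset.univ.filter (fun i => i < f i), (m i (f i) : ℤ) := by
    rw [pff_expand m hsym _ (fun i j h => by simp [h] : ∀ i j, m i j = 0 →
      (fun i j => ε i j * (m i j : ℤ)) i j = 0)]
    apply Finset.sum_congr rfl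
    intro f _
    rw [Finset.prod_mul_distrib, smul_eq_mul]
    ring
  have hcount : (matchCountW m : ℤ) =
      ∑ f ∈ M, ∏ i ∈ Finset.univ.filter (fun i => i < f i), (m i (f i) : ℤ) := by
    rw [matchCountW]
    push_cast
    rfl
  have hd : ∀ f ∈ M, (Equiv.Perm.sign (sigmaOf f) : ℤ) *
      ∏ i ∈ Finset.univ.filter (fun i => i < f i), ε i (f i) = 1 ∨
      (Equiv.Perm.sign (sigmaOf f) : ℤ) *
      ∏ i ∈ Finset.univ.filter (fun i => i < f i), ε i (f i) = -1 := by
    intro f hf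
    rw [hMdef, Finset.mem_filter] at hf
    have habs1 : |(Equiv.Perm.sign (sigmaOf f) : ℤ) *
        ∏ i ∈ Finset.univ.filter (fun i => i < f i), ε i (f i)| = 1 := by
      rw [abs_mul, Finset.abs_prod]
      have h1 : |((Equiv.Perm.sign (sigmaOf f) : ℤˣ) : ℤ)| = 1 := by
        rcases Int.units_eq_one_or (Equiv.Perm.sign (sigmaOf f)) with h | h <;>
          rw [h] <;> norm_num
      rw [h1, one_mul]
      rw [Finset.prod_congr rfl (fun i _ => ?_), Finset.prod_const_one]
      rcases hε.2.1 i (f i) ((hf.2.2 i).2) with h | h <;> rw [h] <;> norm_num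
    exact (abs_eq (by norm_num)).1 habs1
  have hw : ∀ f ∈ M, 0 < ∏ i ∈ Finset.univ.filter (fun i => i < f i), (m i (f i) : ℤ) := by
    intro f hf
    rw [hMdef, Finset.mem_filter] at hf
    exact Finset.prod_pos fun i _ =>
      Int.natCast_pos.2 (Nat.pos_of_ne_zero (hf.2.2 i).2)
  rw [hpffZ, hcount] at hpfaff
  have key := signs_const M
    (fun f => (Equiv.Perm.sign (sigmaOf f) : ℤ) *
      ∏ i ∈ Finset.univ.filter (fun i => i < f i), ε i (f i))
    (fun f => ∏ i ∈ Finset.univ.filter (fun i => i < f i), (m i (f i) : ℤ))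
    hd hw hpfaff
  rcases key with hall | hall
  · left
    rw [pff_expand m hsym (weightedSkewAdj m ε)
      (fun i j h => by simp [weightedSkewAdj, h]), matchPolyW]
    apply Finset.sum_congr rfl
    intro f hf
    simp only [weightedSkewAdj]
    rw [prod_zsmul, smul_smul]
    congr 1
    rw [Finset.prod_mul_distrib, ← mul_assoc]
    have h1 : (Equiv.Perm.sign (sigmaOf f) : ℤ) *
        ∏ i ∈ Finset.univ.filter (fun i => i < f i), ε i (f i) = 1 := hall f hf
    rw [h1, one_mul]
  · right
    rw [pff_expand m hsym (weightedSkewAdj m ε)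
      (fun i j h => by simp [weightedSkewAdj, h]), matchPolyW, ← Finset.sum_neg_distrib]
    apply Finset.sum_congr rfl
    intro f hf
    simp only [weightedSkewAdj]
    rw [prod_zsmul, smul_smul]
    have h1 : (Equiv.Perm.sign (sigmaOf f) : ℤ) *
        ∏ i ∈ Finset.univ.filter (fun i => i < f i), ε i (f i) = -1 := hall f hf
    rw [Finset.prod_mul_distrib, ← mul_assoc, h1, neg_one_mul, neg_smul]
end
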